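/- Let W : X → [0,1] be measurable with Σ_{r(y)=x} W(y) = 1 for all x ∈ X. Then there exists a unique family (P_x)_{x∈X} of Borel probability measures, with P_x supported on Ω_x, such that P_x assigns to each cylinder set {(z_1, z_2, …) ∈ Ω_x : z_1 = a_1, …, z_n = a_n} (for (a_1, …, a_n) an admissible initial segment of a path in Ω_x) the value ∏_{k=1}^n W(a_k); moreover this family satisfies, for every measurable E ⊂ X_∞ and every x ∈ X, Σ_{r(y)=x} W(y) P_y(Ω_y ∩ r̂⁻¹(E)) = P_x(Ω_x ∩ E). -/

import Mathlib

open MeasureTheory Filter Topology ENNReal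

noncomputable section

abbrev Solenoid {X : Type*} (r : X → X) : Type _ :=
  {z : ℤ → X // ∀ n : ℤ, r (z (n + 1)) = z n}

/-- The shift automorphism `r̂` on the solenoid, `(r̂ z) n = z (n-1)`. -/
def shiftHat {X : Type*} (r : X → X) (z : Solenoid r) : Solenoid r :=
  ⟨fun n => z.1 (n - 1), fun n => by
    have h := z.2 (n - 1)
    have h1 : n - 1 + 1 = n := by ring
    rw [h1] at h
    show r (z.1 (n + 1 - 1)) = z.1 (n - 1)
    have h2 : n + 1 - 1 = n := by ring
    rw [h2]
    exact h⟩

/-- The inverse of the shift automorphism `r̂`. -/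
def shiftHatInv {X : Type*} (r : X → X) (z : Solenoid r) : Solenoid r :=
  ⟨fun n => z.1 (n + 1), fun n => z.2 (n + 1)⟩

/-- Integer powers `r̂^n` of the shift automorphism. -/
def shiftHatZ {X : Type*} (r : X → X) : ℤ → Solenoid r → Solenoid r
  | Int.ofNat n => (shiftHat r)^[n]
  | Int.negSucc n => (shiftHatInv r)^[n + 1]

/-- The function `𝔠(z) = #r⁻¹(r(z₀))` on the solenoid. -/
def cFun {X : Type*} (r : X → X) (z : Solenoid r) : ℝ :=
  Nat.card (r ⁻¹' {r (z.1 0)})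

/-- The cocycle `𝔠⁽ⁿ⁾`: `𝔠⁽⁰⁾ = 1`, `𝔠⁽ⁿ⁾ = 𝔠 ⋯ (𝔠∘r̂^{n-1})` for `n ≥ 1`, and
`𝔠⁽⁻ⁿ⁾ = 1/((𝔠∘r̂⁻¹) ⋯ (𝔠∘r̂⁻ⁿ))` for `n ≥ 1`. -/
def cPow {X : Type*} (r : X → X) : ℤ → Solenoid r → ℝ
  | Int.ofNat n => fun z => ∏ k ∈ Finset.range n, cFun r (shiftHatZ r (k : ℤ) z)
  | Int.negSucc n => fun z =>
      (∏ k ∈ Finset.range (n + 1), cFun r (shiftHatZ r (-(k + 1) : ℤ) z))⁻¹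

/-- The set `N_C(x)` of paths starting at `x` converging to the cycle `C = {xc i}`. -/
def NC {X : Type*} [TopologicalSpace X] (r : X → X) {p : ℕ} (xc : ZMod p → X) (x : X) :
    Set (Solenoid r) :=
  {z | z.1 0 = x ∧ ∃ i : ZMod p, Tendsto (fun n : ℕ => z.1 ((p : ℤ) * (n : ℤ))) atTop (𝓝 (xc i))}

/-- Admissibility of a finite word `(a 1, …, a n)` as an initial segment of a path in `Ω_x`. -/
def cylOK {X : Type*} (r : X → X) (x : X) (n : ℕ) (a : Fin n → X) : Prop :=
  (∀ h : 0 < n, r (a ⟨0, h⟩) = x) ∧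
  ∀ (j : ℕ) (hj : j + 1 < n), r (a ⟨j + 1, hj⟩) = a ⟨j, by omega⟩

/-- The cylinder set `{(z₁, z₂, …) ∈ Ω_x : z₁ = a 1, …, z_n = a n}`. -/
def cylSet {X : Type*} (r : X → X) (x : X) (n : ℕ) (a : Fin n → X) : Set (Solenoid r) :=
  {ω | ω.1 0 = x ∧ ∀ j : Fin n, ω.1 ((j : ℕ) + 1) = a j}

/-- A family `(P x)` of Borel probability measures supported on `Ω_x`, assigning to each
admissible cylinder the product of the `W`-values of its letters. -/
def IsPathMeasureFamily {X : Type*} [MeasurableSpace X] (r : X → X) (W : X → ℝ≥0∞)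
    (P : X → MeasureTheory.Measure (Solenoid r)) : Prop :=
  (∀ x, MeasureTheory.IsProbabilityMeasure (P x)) ∧
  (∀ x, P x {ω : Solenoid r | ω.1 0 = x} = 1) ∧
  (∀ (x : X) (n : ℕ) (a : Fin n → X), cylOK r x n a →
    P x (cylSet r x n a) = ∏ j : Fin n, W (a j))

namespace St7

set_option linter.unusedSectionVars false

variable {X : Type*} [MetricSpace X] [CompactSpace X] [MeasurableSpace X] [BorelSpace X]

lemma ev_measurable (r : X → X) (n : ℤ) : Measurable fun z : Solenoid r => z.1 n :=
  (measurable_pi_apply n).comp measurable_subtype_coe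

lemma sol_pred (r : X → X) (z : Solenoid r) (n : ℤ) : z.1 (n - 1) = r (z.1 n) := by
  have h := z.2 (n - 1)
  rw [sub_add_cancel] at h
  exact h.symm

lemma sol_iter (r : X → X) (z : Solenoid r) (k : ℕ) (n : ℤ) :
    z.1 (n - k) = r^[k] (z.1 n) := by
  induction k with
  | zero => simp
  | succ m ih =>
    have h : (n - (m + 1 : ℕ) : ℤ) = (n - m) - 1 := by push_cast; ring
    rw [h, sol_pred, ih, ← Function.iterate_succ_apply' r m]

lemma measurableSet_start (r : X → X) (x : X) :
    MeasurableSet {ω : Solenoid r | ω.1 0 = x} :=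
  (ev_measurable r 0) (measurableSet_singleton x)

lemma measurableSet_cylSet (r : X → X) (x : X) (n : ℕ) (a : Fin n → X) :
    MeasurableSet (cylSet r x n a) := by
  have h : cylSet r x n a =
      {ω : Solenoid r | ω.1 0 = x} ∩ ⋂ j : Fin n, {ω : Solenoid r | ω.1 ((j : ℕ) + 1) = a j} := by
    ext ω
    simp [cylSet, Set.mem_iInter]
  rw [h]
  exact (measurableSet_start r x).inter
    (MeasurableSet.iInter fun j => (ev_measurable r _) (measurableSet_singleton _))

lemma cylOK_of_mem (r : X → X) {x : X} {n : ℕ} {a : Fin n → X} {z : Solenoid r}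
    (hz : z ∈ cylSet r x n a) : cylOK r x n a := by
  obtain ⟨h0, h⟩ := hz
  constructor
  · intro hn
    have h1 := h ⟨0, hn⟩
    have h2 := z.2 0
    simp only [Nat.cast_zero, zero_add] at h1 h2
    rw [← h1, h2, h0]
  · intro j hj
    have h1 := h ⟨j + 1, hj⟩
    have h2 := h ⟨j, by omega⟩
    have h3 := z.2 ((j : ℤ) + 1)
    rw [← h1, ← h2]
    show r (z.1 (((j + 1 : ℕ) : ℤ) + 1)) = z.1 (((j : ℕ) : ℤ) + 1)
    have e1 : (((j + 1 : ℕ) : ℤ) + 1) = (j : ℤ) + 1 + 1 := by push_cast; ring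
    rw [e1]
    exact h3

lemma cylSet_eq_empty (r : X → X) {x : X} {n : ℕ} {a : Fin n → X}
    (h : ¬ cylOK r x n a) : cylSet r x n a = ∅ := by
  rw [Set.eq_empty_iff_forall_notMem]
  intro z hz
  exact h (cylOK_of_mem r hz)

lemma mem_cylSet_self (r : X → X) (x : X) (n : ℕ) (z : Solenoid r) (hz : z.1 0 = x) :
    z ∈ cylSet r x n (fun j => z.1 ((j : ℕ) + 1)) := ⟨hz, fun _ => rfl⟩

lemma iterFiber_finite (r : X → X) (hfin : ∀ x : X, (r ⁻¹' {x}).Finite) (m : ℕ) (x : X) :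
    ((r^[m]) ⁻¹' {x}).Finite := by
  induction m generalizing x with
  | zero => simp
  | succ k ih =>
    have h : (r^[k + 1]) ⁻¹' {x} = ⋃ y ∈ (r^[k]) ⁻¹' {x}, r ⁻¹' {y} := by
      ext z
      simp only [Set.mem_preimage, Set.mem_singleton_iff, Set.mem_iUnion, exists_prop,
        Function.iterate_succ_apply]
      constructor
      · intro hz
        exact ⟨r z, hz, rfl⟩
      · rintro ⟨y, hy, rfl⟩
        exact hy
    rw [h]
    exact Set.Finite.biUnion (ih x) fun y _ => hfin y

lemma cylOK_iterFiber (r : X → X) {x : X} {n : ℕ} {a : Fin n → X} (ha : cylOK r x n a)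
    (j : Fin n) : r^[(j : ℕ) + 1] (a j) = x := by
  obtain ⟨j, hj⟩ := j
  induction j with
  | zero => simpa using ha.1 (by omega)
  | succ k ih =>
    have h2 := ha.2 k hj
    rw [Function.iterate_succ_apply, h2]
    exact ih (by omega)

lemma AW_finite (r : X → X) (hfin : ∀ x : X, (r ⁻¹' {x}).Finite) (x : X) (n : ℕ) :
    {a : Fin n → X | cylOK r x n a}.Finite := by
  apply Set.Finite.subset
    (Set.Finite.pi fun j : Fin n => iterFiber_finite r hfin ((j : ℕ) + 1) x)
  intro a ha
  rw [Set.mem_pi]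
  intro j _
  exact cylOK_iterFiber r ha j

/-- The π-system of cylinder sets at `x`. -/
def cylPi (r : X → X) (x : X) : Set (Set (Solenoid r)) :=
  {s | ∃ (n : ℕ) (a : Fin n → X), s = cylSet r x n a}

lemma start_mem_cylPi (r : X → X) (x : X) :
    {z : Solenoid r | z.1 0 = x} ∈ cylPi r x := by
  refine ⟨0, fun j => x, ?_⟩
  ext z
  simp [cylSet]

lemma cylSet_inter_of_le (r : X → X) (x : X) {n m : ℕ} (hnm : n ≤ m) (a : Fin n → X)
    (b : Fin m → X) (hne : (cylSet r x n a ∩ cylSet r x m b).Nonempty) :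
    cylSet r x n a ∩ cylSet r x m b = cylSet r x m b := by
  obtain ⟨z, hza, hzb⟩ := hne
  refine Set.inter_eq_self_of_subset_right ?_
  intro w hw
  refine ⟨hw.1, fun j => ?_⟩
  have h1 := hza.2 j
  have h2 := hzb.2 ⟨(j : ℕ), lt_of_lt_of_le j.2 hnm⟩
  have h3 := hw.2 ⟨(j : ℕ), lt_of_lt_of_le j.2 hnm⟩
  rw [show ((j : ℕ) : ℤ) + 1 = (((⟨(j : ℕ), lt_of_lt_of_le j.2 hnm⟩ : Fin m) : ℕ) : ℤ) + 1 from rfl,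
    h3, ← h2, h1]

lemma isPiSystem_cylPi (r : X → X) (x : X) : IsPiSystem (cylPi r x) := by
  rintro s ⟨n, a, rfl⟩ t ⟨m, b, rfl⟩ hne
  rcases le_total n m with h | h
  · rw [cylSet_inter_of_le r x h a b hne]
    exact ⟨m, b, rfl⟩
  · rw [Set.inter_comm] at hne ⊢
    rw [cylSet_inter_of_le r x h b a hne]
    exact ⟨n, a, rfl⟩

lemma trace_coord (r : X → X) (hfin : ∀ x : X, (r ⁻¹' {x}).Finite) (x : X) (m : ℤ)
    (B : Set X) :
    ∃ F, MeasurableSet[MeasurableSpace.generateFrom (cylPi r x)] F ∧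
      (fun z : Solenoid r => z.1 m) ⁻¹' B ∩ {z : Solenoid r | z.1 0 = x} =
      F ∩ {z : Solenoid r | z.1 0 = x} := by
  rcases le_or_gt m 0 with hm | hm
  · -- negative coordinates are determined by z.1 0
    set k := (-m).toNat with hk
    have hmk : ∀ z : Solenoid r, z.1 m = r^[k] (z.1 0) := by
      intro z
      have := sol_iter r z k 0
      rw [show (0 - (k : ℤ)) = m by omega] at this
      exact this
    by_cases hB : r^[k] x ∈ B
    · refine ⟨{z : Solenoid r | z.1 0 = x}, MeasurableSpace.measurableSet_generateFrom
        (start_mem_cylPi r x), ?_⟩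
      ext z
      simp only [Set.mem_inter_iff, Set.mem_preimage, Set.mem_setOf_eq]
      constructor
      · rintro ⟨_, h2⟩; exact ⟨h2, h2⟩
      · rintro ⟨h2, _⟩
        refine ⟨?_, h2⟩
        rw [hmk z, h2]; exact hB
    · refine ⟨∅, @MeasurableSet.empty _ (MeasurableSpace.generateFrom (cylPi r x)), ?_⟩
      ext z
      simp only [Set.mem_inter_iff, Set.mem_preimage, Set.mem_setOf_eq, Set.empty_inter,
        Set.mem_empty_iff_false, iff_false, not_and]
      intro h1 h2
      rw [hmk z, h2] at h1
      exact hB h1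
  · -- positive coordinate m = n ≥ 1
    set n := m.toNat with hn
    have hn1 : 1 ≤ n := by omega
    have hmn : (n : ℤ) = m := by omega
    set V : Set (Fin n → X) := {a | cylOK r x n a ∧ a ⟨n - 1, by omega⟩ ∈ B} with hV
    have hVfin : V.Finite := (AW_finite r hfin x n).subset fun a ha => ha.1
    refine ⟨⋃ a ∈ V, cylSet r x n a, ?_, ?_⟩
    · exact MeasurableSet.biUnion hVfin.countable fun a _ =>
        MeasurableSpace.measurableSet_generateFrom ⟨n, a, rfl⟩
    · ext z
      simp only [Set.mem_inter_iff, Set.mem_preimage, Set.mem_setOf_eq, Set.mem_iUnion,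
        exists_prop]
      constructor
      · rintro ⟨h1, h2⟩
        refine ⟨⟨fun j => z.1 ((j : ℕ) + 1), ⟨?_, ?_⟩, mem_cylSet_self r x n z h2⟩, h2⟩
        · exact cylOK_of_mem r (mem_cylSet_self r x n z h2)
        · show z.1 (((n - 1 : ℕ) : ℤ) + 1) ∈ B
          rw [show (((n - 1 : ℕ) : ℤ) + 1) = m by omega]
          exact h1
      · rintro ⟨⟨a, ha, hza⟩, h2⟩
        refine ⟨?_, h2⟩
        have h3 := hza.2 ⟨n - 1, by omega⟩
        rw [show m = (((n - 1 : ℕ) : ℤ) + 1) by omega, h3]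
        exact ha.2

lemma trace_measurable (r : X → X) (hfin : ∀ x : X, (r ⁻¹' {x}).Finite) (x : X)
    {E : Set (Solenoid r)} (hE : MeasurableSet E) :
    ∃ F, MeasurableSet[MeasurableSpace.generateFrom (cylPi r x)] F ∧
      E ∩ {z : Solenoid r | z.1 0 = x} = F ∩ {z : Solenoid r | z.1 0 = x} := by
  set S := {z : Solenoid r | z.1 0 = x} with hS
  let m' : MeasurableSpace (Solenoid r) :=
    { MeasurableSet' := fun E => ∃ F,
        MeasurableSet[MeasurableSpace.generateFrom (cylPi r x)] F ∧ E ∩ S = F ∩ S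
      measurableSet_empty :=
        ⟨∅, @MeasurableSet.empty _ (MeasurableSpace.generateFrom (cylPi r x)), by simp⟩
      measurableSet_compl := by
        rintro E ⟨F, hF, hEF⟩
        refine ⟨Fᶜ, hF.compl, ?_⟩
        ext z
        have := Set.ext_iff.mp hEF z
        simp only [Set.mem_inter_iff, Set.mem_compl_iff] at this ⊢
        tauto
      measurableSet_iUnion := by
        intro f hf
        choose F hF hEF using hf
        exact ⟨⋃ i, F i, MeasurableSet.iUnion hF, by
          rw [Set.iUnion_inter, Set.iUnion_inter]; exact Set.iUnion_congr hEF⟩ }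
  have hval : Measurable[m'] (Subtype.val : Solenoid r → ℤ → X) := by
    rw [measurable_pi_iff]
    intro m
    intro B _
    exact trace_coord r hfin x m B
  have hle : MeasurableSpace.comap (Subtype.val) (MeasurableSpace.pi) ≤ m' := hval.comap_le
  exact hle E hE

lemma measure_eq_of_cyl (r : X → X) (hfin : ∀ x : X, (r ⁻¹' {x}).Finite) (x : X)
    (μ ν : Measure (Solenoid r)) [IsProbabilityMeasure μ] [IsProbabilityMeasure ν]
    (hμ : μ {z : Solenoid r | z.1 0 = x} = 1) (hν : ν {z : Solenoid r | z.1 0 = x} = 1)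
    (hcyl : ∀ (n : ℕ) (a : Fin n → X), μ (cylSet r x n a) = ν (cylSet r x n a)) :
    μ = ν := by
  have hGle : MeasurableSpace.generateFrom (cylPi r x) ≤
      (inferInstance : MeasurableSpace (Solenoid r)) := by
    refine MeasurableSpace.generateFrom_le ?_
    rintro s ⟨n, a, rfl⟩
    exact measurableSet_cylSet r x n a
  have key : ∀ F, MeasurableSet[MeasurableSpace.generateFrom (cylPi r x)] F → μ F = ν F := by
    intro F hF
    refine @MeasurableSpace.induction_on_inter (Solenoid r) (MeasurableSpace.generateFrom (cylPi r x))
      (fun F _ => μ F = ν F) (cylPi r x) rfl (isPiSystem_cylPi r x) (by simp) ?_ ?_ ?_ F hF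
    · rintro t ⟨n, a, rfl⟩
      exact hcyl n a
    · intro t ht h
      rw [measure_compl (hGle _ ht) (measure_ne_top μ t),
        measure_compl (hGle _ ht) (measure_ne_top ν t), h, measure_univ, measure_univ]
    · intro f hd hm hC
      rw [measure_iUnion hd fun i => hGle _ (hm i), measure_iUnion hd fun i => hGle _ (hm i)]
      exact tsum_congr hC
  have hμc : μ {z : Solenoid r | z.1 0 = x}ᶜ = 0 := by
    rw [measure_compl (measurableSet_start r x) (measure_ne_top _ _), hμ, measure_univ,
      tsub_self]
  have hνc : ν {z : Solenoid r | z.1 0 = x}ᶜ = 0 := by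
    rw [measure_compl (measurableSet_start r x) (measure_ne_top _ _), hν, measure_univ,
      tsub_self]
  ext E hE
  obtain ⟨F, hF, hEF⟩ := trace_measurable r hfin x hE
  calc μ E = μ (E ∩ {z : Solenoid r | z.1 0 = x}) := (measure_inter_conull hμc).symm
    _ = μ (F ∩ {z : Solenoid r | z.1 0 = x}) := by rw [hEF]
    _ = μ F := measure_inter_conull hμc
    _ = ν F := key F hF
    _ = ν (F ∩ {z : Solenoid r | z.1 0 = x}) := (measure_inter_conull hνc).symm
    _ = ν (E ∩ {z : Solenoid r | z.1 0 = x}) := by rw [hEF]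
    _ = ν E := measure_inter_conull hνc

section Construction

variable (r : X → X) (hfin : ∀ x : X, (r ⁻¹' {x}).Finite)
  (hne : ∀ x : X, (r ⁻¹' {x}).Nonempty) (W : X → ℝ≥0∞)

/-- number of preimages -/
def fk (y : X) : ℕ := (hfin y).toFinset.card

/-- enumeration of the fiber -/
def fe (y : X) : Fin (fk r hfin y) → X := fun i => ((hfin y).toFinset.equivFin.symm i : X)

lemma fe_mem (y : X) (i : Fin (fk r hfin y)) : r (fe r hfin y i) = y := by
  have h : (fe r hfin y i) ∈ (hfin y).toFinset := ((hfin y).toFinset.equivFin.symm i).2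
  rw [Set.Finite.mem_toFinset] at h
  exact h

lemma fe_inj (y : X) : Function.Injective (fe r hfin y) := by
  intro i j hij
  have := Subtype.ext hij (p := fun z => z ∈ (hfin y).toFinset)
  exact (hfin y).toFinset.equivFin.symm.injective this

lemma fe_surj (y : X) {y' : X} (hy' : r y' = y) : ∃ i, fe r hfin y i = y' := by
  have h : y' ∈ (hfin y).toFinset := by rw [Set.Finite.mem_toFinset]; exact hy'
  refine ⟨(hfin y).toFinset.equivFin ⟨y', h⟩, ?_⟩
  simp [fe]

include hne in
lemma fk_pos (y : X) : 0 < fk r hfin y := by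
  rw [fk, Finset.card_pos]
  obtain ⟨y', hy'⟩ := hne y
  exact ⟨y', by rwa [Set.Finite.mem_toFinset]⟩

lemma fe_sum (hWsum : ∀ x : X, ∑' y : r ⁻¹' {x}, W y.1 = 1) (y : X) :
    ∑ i : Fin (fk r hfin y), W (fe r hfin y i) = 1 := by
  have h0 : ∑' p : (r ⁻¹' {y} : Set X), W p.1 = 1 := hWsum y
  rw [← (hfin y).coe_toFinset, Finset.tsum_subtype'] at h0
  rw [← h0, ← Finset.sum_coe_sort ((hfin y).toFinset) W]
  exact Equiv.sum_comp ((hfin y).toFinset.equivFin.symm) (fun p => W p.1)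

/-- weights of children -/
def fw (y : X) (j : ℕ) : ℝ :=
  if h : j < fk r hfin y then (W (fe r hfin y ⟨j, h⟩)).toReal else 0

/-- cumulative weights -/
def fc (y : X) (i : ℕ) : ℝ := ∑ j ∈ Finset.range i, fw r hfin W y j

lemma fw_nonneg (y : X) (j : ℕ) : 0 ≤ fw r hfin W y j := by
  rw [fw]; split <;> simp [ENNReal.toReal_nonneg]

lemma fc_zero (y : X) : fc r hfin W y 0 = 0 := by simp [fc]

lemma fc_succ (y : X) (i : ℕ) :
    fc r hfin W y (i + 1) = fc r hfin W y i + fw r hfin W y i := by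
  rw [fc, fc, Finset.sum_range_succ]

lemma fc_mono (y : X) : Monotone (fc r hfin W y) := by
  intro i j hij
  exact Finset.sum_le_sum_of_subset_of_nonneg (Finset.range_subset_range.2 hij)
    fun k _ _ => fw_nonneg r hfin W y k

lemma fc_nonneg (y : X) (i : ℕ) : 0 ≤ fc r hfin W y i := by
  rw [← fc_zero r hfin W y]; exact fc_mono r hfin W y (Nat.zero_le i)

lemma fc_top (hW1 : ∀ x, W x ≤ 1) (hWsum : ∀ x : X, ∑' y : r ⁻¹' {x}, W y.1 = 1) (y : X) :
    fc r hfin W y (fk r hfin y) = 1 := by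
  have hsum := fe_sum r hfin W hWsum y
  have hnetop : ∀ i : Fin (fk r hfin y), W (fe r hfin y i) ≠ ⊤ :=
    fun i => (lt_of_le_of_lt (hW1 _) ENNReal.one_lt_top).ne
  have hfweq : ∀ i : Fin (fk r hfin y), fw r hfin W y i = (W (fe r hfin y i)).toReal := by
    intro i; rw [fw, dif_pos i.2]
  rw [fc, ← Fin.sum_univ_eq_sum_range (fun j => fw r hfin W y j) (fk r hfin y),
    Finset.sum_congr rfl (fun i _ => hfweq i), ← ENNReal.toReal_sum (fun i _ => hnetop i), hsum]
  simp

lemma fc_le_one (hW1 : ∀ x, W x ≤ 1) (hWsum : ∀ x : X, ∑' y : r ⁻¹' {x}, W y.1 = 1) (y : X)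
    (i : ℕ) (hi : i ≤ fk r hfin y) : fc r hfin W y i ≤ 1 := by
  rw [← fc_top r hfin W hW1 hWsum y]
  exact fc_mono r hfin W y hi

/-- monotone ℕ-valued index function -/
def idxM (y : X) (L ℓ t : ℝ) : ℕ :=
  min (((Finset.range (fk r hfin y - 1)).filter
    (fun j => L + ℓ * fc r hfin W y (j + 1) ≤ t)).card) (fk r hfin y - 1)

lemma idxM_mono (y : X) (L ℓ : ℝ) : Monotone (idxM r hfin W y L ℓ) := by
  intro t t' htt'
  refine min_le_min (Finset.card_le_card ?_) le_rfl
  intro j hj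
  rw [Finset.mem_filter] at hj ⊢
  exact ⟨hj.1, le_trans hj.2 htt'⟩

/-- the chosen child index -/
def idxF (y : X) (L ℓ t : ℝ) : Fin (fk r hfin y) :=
  ⟨idxM r hfin W y L ℓ t, by
    have h1 := fk_pos r hfin hne y
    have h2 : idxM r hfin W y L ℓ t ≤ fk r hfin y - 1 := min_le_right _ _
    omega⟩

lemma idxF_eq (y : X) (L ℓ t : ℝ) (hl : 0 ≤ ℓ) (i : Fin (fk r hfin y))
    (h1 : L + ℓ * fc r hfin W y i ≤ t) (h2 : t < L + ℓ * fc r hfin W y ((i : ℕ) + 1)) :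
    idxF r hfin hne W y L ℓ t = i := by
  have hkey : (Finset.range (fk r hfin y - 1)).filter
      (fun j => L + ℓ * fc r hfin W y (j + 1) ≤ t) = Finset.range (i : ℕ) := by
    ext j
    simp only [Finset.mem_filter, Finset.mem_range]
    constructor
    · rintro ⟨hj1, hj2⟩
      by_contra hji
      push_neg at hji
      have hmon : fc r hfin W y ((i : ℕ) + 1) ≤ fc r hfin W y (j + 1) :=
        fc_mono r hfin W y (by omega)
      have : L + ℓ * fc r hfin W y ((i : ℕ) + 1) ≤ L + ℓ * fc r hfin W y (j + 1) := by
        have := mul_le_mul_of_nonneg_left hmon hl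
        linarith
      linarith
    · intro hj
      have hik : (i : ℕ) < fk r hfin y := i.2
      refine ⟨by omega, ?_⟩
      have hmon : fc r hfin W y (j + 1) ≤ fc r hfin W y (i : ℕ) :=
        fc_mono r hfin W y (by omega)
      have := mul_le_mul_of_nonneg_left hmon hl
      linarith
  have hik : (i : ℕ) ≤ fk r hfin y - 1 := by have := i.2; omega
  apply Fin.ext
  rw [idxF]
  show idxM r hfin W y L ℓ t = (i : ℕ)
  rw [idxM, hkey, Finset.card_range]
  omega

lemma idxF_cell (hW1 : ∀ x, W x ≤ 1) (hWsum : ∀ x : X, ∑' y : r ⁻¹' {x}, W y.1 = 1)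
    (y : X) (L ℓ t : ℝ) (hl : 0 ≤ ℓ) (ht1 : L ≤ t) (ht2 : t < L + ℓ) :
    L + ℓ * fc r hfin W y (idxF r hfin hne W y L ℓ t) ≤ t ∧
      t < L + ℓ * fc r hfin W y ((idxF r hfin hne W y L ℓ t : ℕ) + 1) := by
  have hk := fk_pos r hfin hne y
  have hwit : t < L + ℓ * fc r hfin W y ((fk r hfin y - 1) + 1) := by
    rw [show fk r hfin y - 1 + 1 = fk r hfin y by omega, fc_top r hfin W hW1 hWsum y]
    linarith
  have hex : ∃ i, t < L + ℓ * fc r hfin W y (i + 1) := ⟨fk r hfin y - 1, hwit⟩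
  set m := Nat.find hex with hm
  have hpm : t < L + ℓ * fc r hfin W y (m + 1) := Nat.find_spec hex
  have hmk : m < fk r hfin y := by
    have h1 : m ≤ fk r hfin y - 1 := Nat.find_le hwit
    omega
  have hlow : L + ℓ * fc r hfin W y m ≤ t := by
    rcases Nat.eq_zero_or_pos m with h0 | h0
    · rw [h0, fc_zero]
      linarith
    · have hnot := Nat.find_min hex (show m - 1 < m by omega)
      push_neg at hnot
      rw [show m - 1 + 1 = m by omega] at hnot
      exact hnot
  have heq := idxF_eq r hfin hne W y L ℓ t hl ⟨m, hmk⟩ hlow hpm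
  rw [heq]
  exact ⟨hlow, hpm⟩

end Construction

section Construction2

variable (r : X → X) (hfin : ∀ x : X, (r ⁻¹' {x}).Finite)
  (hne : ∀ x : X, (r ⁻¹' {x}).Nonempty) (W : X → ℝ≥0∞)

/-- one step of interval splitting -/
def gstep (v : X × ℝ × ℝ) (i : Fin (fk r hfin v.1)) : X × ℝ × ℝ :=
  (fe r hfin v.1 i, v.2.1 + v.2.2 * fc r hfin W v.1 i, v.2.2 * fw r hfin W v.1 i)

def nxt (v : X × ℝ × ℝ) (t : ℝ) : X × ℝ × ℝ :=
  gstep r hfin W v (idxF r hfin hne W v.1 v.2.1 v.2.2 t)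

def DD (x : X) : ℕ → ℝ → X × ℝ × ℝ
  | 0, _ => (x, 0, 1)
  | n + 1, t => nxt r hfin hne W (DD x n t) t

lemma DD_zero (x : X) (t : ℝ) : DD r hfin hne W x 0 t = (x, 0, 1) := rfl

lemma DD_succ (x : X) (n : ℕ) (t : ℝ) :
    DD r hfin hne W x (n + 1) t = nxt r hfin hne W (DD r hfin hne W x n t) t := rfl

lemma DD_fst_succ (x : X) (n : ℕ) (t : ℝ) :
    r ((DD r hfin hne W x (n + 1) t).1) = (DD r hfin hne W x n t).1 :=
  fe_mem r hfin _ _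

lemma DD_len_nonneg (x : X) (n : ℕ) (t : ℝ) : 0 ≤ (DD r hfin hne W x n t).2.2 := by
  induction n with
  | zero => norm_num [DD_zero]
  | succ k ih =>
    rw [DD_succ]
    exact mul_nonneg ih (fw_nonneg r hfin W _ _)

lemma DD_cell (hW1 : ∀ x, W x ≤ 1) (hWsum : ∀ x : X, ∑' y : r ⁻¹' {x}, W y.1 = 1)
    (x : X) (n : ℕ) (t : ℝ) (ht : t ∈ Set.Ico (0 : ℝ) 1) :
    (DD r hfin hne W x n t).2.1 ≤ t ∧
      t < (DD r hfin hne W x n t).2.1 + (DD r hfin hne W x n t).2.2 := by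
  induction n with
  | zero =>
    rw [DD_zero]
    exact ⟨ht.1, by simpa using ht.2⟩
  | succ k ih =>
    obtain ⟨h1, h2⟩ := ih
    have hl := DD_len_nonneg r hfin hne W x k t
    obtain ⟨hc1, hc2⟩ := idxF_cell r hfin hne W hW1 hWsum (DD r hfin hne W x k t).1
      (DD r hfin hne W x k t).2.1 (DD r hfin hne W x k t).2.2 t hl h1 h2
    rw [DD_succ]
    constructor
    · exact hc1
    · rw [nxt, gstep]
      simp only []
      have := fc_succ r hfin W (DD r hfin hne W x k t).1
        ((idxF r hfin hne W (DD r hfin hne W x k t).1 (DD r hfin hne W x k t).2.1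
          (DD r hfin hne W x k t).2.2 t : ℕ))
      rw [this] at hc2
      ring_nf
      ring_nf at hc2
      linarith

lemma meas_of_levels {α : Type*} [MeasurableSpace α] {f : ℝ → α}
    (hfr : (Set.range f).Finite) (hl : ∀ v, MeasurableSet {t | f t = v}) : Measurable f := by
  intro B _
  have h : f ⁻¹' B = ⋃ v ∈ Set.range f ∩ B, {t | f t = v} := by
    ext t
    simp only [Set.mem_preimage, Set.mem_iUnion, Set.mem_inter_iff, Set.mem_range,
      Set.mem_setOf_eq, exists_prop]
    constructor
    · intro h
      exact ⟨f t, ⟨⟨t, rfl⟩, h⟩, rfl⟩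
    · rintro ⟨v, ⟨_, hvB⟩, ht⟩
      rw [ht]
      exact hvB
  rw [h]
  exact (hfr.inter_of_left B).measurableSet_biUnion fun v _ => hl v

lemma meas_idxF (y : X) (L ℓ : ℝ) (i : Fin (fk r hfin y)) :
    MeasurableSet {t : ℝ | idxF r hfin hne W y L ℓ t = i} := by
  have h : {t : ℝ | idxF r hfin hne W y L ℓ t = i} =
      (fun t => idxM r hfin W y L ℓ t) ⁻¹' {(i : ℕ)} := by
    ext t
    simp only [Set.mem_setOf_eq, Set.mem_preimage, Set.mem_singleton_iff]
    exact ⟨fun h => congrArg Fin.val h, fun h => Fin.ext h⟩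
  rw [h]
  exact (idxM_mono r hfin W y L ℓ).measurable (measurableSet_singleton _)

lemma meas_nxt (v : X × ℝ × ℝ) (u : X × ℝ × ℝ) :
    MeasurableSet {t : ℝ | nxt r hfin hne W v t = u} := by
  have h : {t : ℝ | nxt r hfin hne W v t = u} =
      ⋃ i : Fin (fk r hfin v.1), {t : ℝ | idxF r hfin hne W v.1 v.2.1 v.2.2 t = i} ∩
        {t : ℝ | gstep r hfin W v i = u} := by
    ext t
    simp only [Set.mem_setOf_eq, Set.mem_iUnion, Set.mem_inter_iff]
    constructor
    · intro h
      exact ⟨idxF r hfin hne W v.1 v.2.1 v.2.2 t, rfl, h⟩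
    · rintro ⟨i, h1, h2⟩
      rw [nxt, h1]
      exact h2
  rw [h]
  exact MeasurableSet.iUnion fun i =>
    (meas_idxF r hfin hne W v.1 v.2.1 v.2.2 i).inter (MeasurableSet.const _)

lemma DD_levels (x : X) (n : ℕ) :
    (Set.range (DD r hfin hne W x n)).Finite ∧
      ∀ v, MeasurableSet {t : ℝ | DD r hfin hne W x n t = v} := by
  induction n with
  | zero =>
    constructor
    · refine (Set.finite_singleton ((x, 0, 1) : X × ℝ × ℝ)).subset ?_
      rintro _ ⟨t, rfl⟩
      simp [DD_zero]
    · intro v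
      show MeasurableSet {t : ℝ | (x, (0 : ℝ), (1 : ℝ)) = v}
      exact MeasurableSet.const _
  | succ k ih =>
    obtain ⟨hfR, hlv⟩ := ih
    constructor
    · refine (hfR.biUnion fun v _ => Set.finite_range (gstep r hfin W v)).subset ?_
      rintro _ ⟨t, rfl⟩
      refine Set.mem_biUnion (Set.mem_range_self t) ?_
      exact ⟨idxF r hfin hne W _ _ _ t, rfl⟩
    · intro u
      have h : {t : ℝ | DD r hfin hne W x (k + 1) t = u} =
          ⋃ v ∈ Set.range (DD r hfin hne W x k),
            {t : ℝ | DD r hfin hne W x k t = v} ∩ {t : ℝ | nxt r hfin hne W v t = u} := by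
        ext t
        simp only [Set.mem_setOf_eq, Set.mem_iUnion, Set.mem_inter_iff, exists_prop]
        constructor
        · intro h
          exact ⟨DD r hfin hne W x k t, Set.mem_range_self t, rfl, h⟩
        · rintro ⟨v, _, h1, h2⟩
          rw [DD_succ, h1]
          exact h2
      rw [h]
      exact hfR.measurableSet_biUnion fun v _ => (hlv v).inter (meas_nxt r hfin hne W v u)

lemma meas_DD (x : X) (n : ℕ) : Measurable (DD r hfin hne W x n) :=
  meas_of_levels (DD_levels r hfin hne W x n).1 (DD_levels r hfin hne W x n).2

def pathFun (x : X) (t : ℝ) : ℤ → X := fun m =>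
  if 0 ≤ m then (DD r hfin hne W x m.toNat t).1 else r^[(-m).toNat] x

lemma pathFun_nat (x : X) (t : ℝ) (m : ℕ) :
    pathFun r hfin hne W x t (m : ℤ) = (DD r hfin hne W x m t).1 := by
  rw [pathFun, if_pos (by positivity), Int.toNat_natCast]

lemma pathFun_prop (x : X) (t : ℝ) (m : ℤ) :
    r (pathFun r hfin hne W x t (m + 1)) = pathFun r hfin hne W x t m := by
  rcases le_or_gt 0 m with hm | hm
  · rw [show m = ((m.toNat : ℕ) : ℤ) by omega, show ((m.toNat : ℕ) : ℤ) + 1 = ((m.toNat + 1 : ℕ) : ℤ) by push_cast; ring,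
      pathFun_nat, pathFun_nat]
    exact DD_fst_succ r hfin hne W x m.toNat t
  · rcases eq_or_lt_of_le (by omega : m + 1 ≤ 0) with h0 | h0
    · rw [h0, show m = -1 by omega]
      rw [show ((0 : ℤ)) = ((0 : ℕ) : ℤ) by norm_num, pathFun_nat]
      rw [pathFun, if_neg (by norm_num)]
      simp [DD_zero]
    · rw [pathFun, pathFun, if_neg (by omega), if_neg (by omega)]
      rw [show (-m).toNat = (-(m + 1)).toNat + 1 by omega, Function.iterate_succ_apply']

def Phi (x : X) (t : ℝ) : Solenoid r :=
  ⟨pathFun r hfin hne W x t, fun m => pathFun_prop r hfin hne W x t m⟩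

lemma meas_Phi (x : X) : Measurable (Phi r hfin hne W x) := by
  refine Measurable.subtype_mk ?_
  rw [measurable_pi_iff]
  intro m
  rcases le_or_gt 0 m with hm | hm
  · have h : (fun t => pathFun r hfin hne W x t m) =
        fun t => (DD r hfin hne W x m.toNat t).1 := by
      funext t
      rw [pathFun, if_pos hm]
    rw [h]
    exact measurable_fst.comp (meas_DD r hfin hne W x m.toNat)
  · have h : (fun t => pathFun r hfin hne W x t m) = fun _ => r^[(-m).toNat] x := by
      funext t
      rw [pathFun, if_neg (by omega)]
    rw [h]
    exact measurable_const

/-- The path-space measure for the weight `W`, starting at `x`. -/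
def PP (x : X) : Measure (Solenoid r) :=
  (volume.restrict (Set.Ico (0 : ℝ) 1)).map (Phi r hfin hne W x)

lemma Phi_zero (x : X) (t : ℝ) : (Phi r hfin hne W x t).1 0 = x := by
  show pathFun r hfin hne W x t ((0 : ℕ) : ℤ) = x
  rw [pathFun_nat]
  rfl

instance PP_prob (x : X) : IsProbabilityMeasure (PP r hfin hne W x) := by
  constructor
  rw [PP, Measure.map_apply (meas_Phi r hfin hne W x) MeasurableSet.univ, Set.preimage_univ,
    Measure.restrict_apply_univ, Real.volume_Ico]
  norm_num

lemma PP_start (x : X) : PP r hfin hne W x {z : Solenoid r | z.1 0 = x} = 1 := by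
  rw [PP, Measure.map_apply (meas_Phi r hfin hne W x) (measurableSet_start r x)]
  have h : (Phi r hfin hne W x) ⁻¹' {z : Solenoid r | z.1 0 = x} = Set.univ := by
    ext t
    simp [Phi_zero]
  rw [h, Measure.restrict_apply_univ, Real.volume_Ico]
  norm_num

def lastPt (x : X) (n : ℕ) (a : Fin n → X) : X :=
  if h : 0 < n then a ⟨n - 1, by omega⟩ else x

end Construction2

section Cell

variable (r : X → X) (hfin : ∀ x : X, (r ⁻¹' {x}).Finite)
  (hne : ∀ x : X, (r ⁻¹' {x}).Nonempty) (W : X → ℝ≥0∞)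

lemma cell_lemma (hW1 : ∀ x, W x ≤ 1) (hWsum : ∀ x : X, ∑' y : r ⁻¹' {x}, W y.1 = 1)
    (x : X) : ∀ (n : ℕ) (a : Fin n → X), cylOK r x n a →
    ∃ L : ℝ,
      {t : ℝ | t ∈ Set.Ico (0 : ℝ) 1 ∧
          ∀ j : Fin n, (DD r hfin hne W x ((j : ℕ) + 1) t).1 = a j}
        = Set.Ico L (L + ∏ j : Fin n, (W (a j)).toReal) ∧
      ∀ t, (t ∈ Set.Ico (0 : ℝ) 1 ∧
          ∀ j : Fin n, (DD r hfin hne W x ((j : ℕ) + 1) t).1 = a j) →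
        DD r hfin hne W x n t = (lastPt x n a, L, ∏ j : Fin n, (W (a j)).toReal) := by
  intro n
  induction n with
  | zero =>
    intro a _
    refine ⟨0, ?_, ?_⟩
    · ext t
      simp [Set.mem_Ico]
    · intro t _
      rw [DD_zero, lastPt, dif_neg (by omega)]
      simp
  | succ n IH =>
    intro a ha
    set a' : Fin n → X := fun j => a j.castSucc with ha'def
    have ha' : cylOK r x n a' := by
      constructor
      · intro h
        exact ha.1 (by omega)
      · intro j hj
        exact ha.2 j (by omega)
    obtain ⟨L', hset', hDD'⟩ := IH a' ha'
    set p' : ℝ := ∏ j : Fin n, (W (a' j)).toReal with hp'def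
    have hp'nonneg : 0 ≤ p' := Finset.prod_nonneg fun j _ => ENNReal.toReal_nonneg
    set y' : X := lastPt x n a' with hy'def
    have hn1 : n < n + 1 := by omega
    have hy : r (a ⟨n, hn1⟩) = y' := by
      rcases Nat.eq_zero_or_pos n with h0 | h0
      · subst h0
        rw [hy'def, lastPt, dif_neg (by omega)]
        exact ha.1 (by omega)
      · rw [hy'def, lastPt, dif_pos h0]
        have h2 := ha.2 (n - 1) (by omega)
        rw [ha'def]
        show r (a ⟨n, hn1⟩) = a (⟨n - 1, by omega⟩ : Fin n).castSucc
        have e1 : (⟨n, hn1⟩ : Fin (n + 1)) = ⟨n - 1 + 1, by omega⟩ :=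
          Fin.mk_eq_mk.mpr (by omega)
        have e2 : (⟨n - 1, by omega⟩ : Fin n).castSucc = (⟨n - 1, by omega⟩ : Fin (n + 1)) :=
          rfl
        rw [e1, e2]
        exact h2
    obtain ⟨i, hi⟩ := fe_surj r hfin y' hy
    set L : ℝ := L' + p' * fc r hfin W y' i with hLdef
    have hfwi : fw r hfin W y' (i : ℕ) = (W (a ⟨n, hn1⟩)).toReal := by
      have h1 : fw r hfin W y' (i : ℕ) = (W (fe r hfin y' i)).toReal := by
        rw [fw, dif_pos i.2]
      rw [h1, hi]
    have hprod : ∏ j : Fin (n + 1), (W (a j)).toReal = p' * (W (a ⟨n, hn1⟩)).toReal := by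
      rw [Fin.prod_univ_castSucc]
      rfl
    have hforall : ∀ t : ℝ,
        (∀ j : Fin (n + 1), (DD r hfin hne W x ((j : ℕ) + 1) t).1 = a j) ↔
        ((∀ j : Fin n, (DD r hfin hne W x ((j : ℕ) + 1) t).1 = a' j) ∧
          (DD r hfin hne W x (n + 1) t).1 = a ⟨n, hn1⟩) := by
      intro t
      constructor
      · intro h
        exact ⟨fun j => h j.castSucc, h ⟨n, hn1⟩⟩
      · rintro ⟨h1, h2⟩
        intro j
        rcases Nat.lt_or_ge (j : ℕ) n with hj | hj
        · exact h1 ⟨(j : ℕ), hj⟩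
        · have : j = ⟨n, hn1⟩ := by
            apply Fin.ext
            show (j : ℕ) = n
            have := j.2
            omega
          rw [this]
          exact h2
    have hIcoSub : Set.Ico L (L + p' * fw r hfin W y' (i : ℕ)) ⊆ Set.Ico L' (L' + p') := by
      intro t ht
      obtain ⟨ht1, ht2⟩ := ht
      constructor
      · have : 0 ≤ p' * fc r hfin W y' (i : ℕ) :=
          mul_nonneg hp'nonneg (fc_nonneg r hfin W y' _)
        rw [hLdef] at ht1
        linarith
      · have hle1 : fc r hfin W y' ((i : ℕ) + 1) ≤ 1 :=
          fc_le_one r hfin W hW1 hWsum y' ((i : ℕ) + 1) (by have := i.2; omega)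
        have := mul_le_mul_of_nonneg_left hle1 hp'nonneg
        have hsucc := fc_succ r hfin W y' (i : ℕ)
        rw [hLdef] at ht2
        nlinarith [ht2]
    -- key pointwise characterization on the old cell
    have hkey : ∀ t, t ∈ Set.Ico L' (L' + p') → t ∈ Set.Ico (0 : ℝ) 1 →
        (∀ j : Fin n, (DD r hfin hne W x ((j : ℕ) + 1) t).1 = a' j) →
        ((DD r hfin hne W x (n + 1) t).1 = a ⟨n, hn1⟩ ↔
          t ∈ Set.Ico L (L + p' * fw r hfin W y' (i : ℕ))) := by
      intro t htc ht01 hword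
      have hDt : DD r hfin hne W x n t = (y', L', p') := hDD' t ⟨ht01, hword⟩
      have hfst : (DD r hfin hne W x (n + 1) t).1 =
          fe r hfin y' (idxF r hfin hne W y' L' p' t) := by
        rw [DD_succ, hDt]
        rfl
      have hsucc := fc_succ r hfin W y' (i : ℕ)
      constructor
      · intro h
        have hidx : idxF r hfin hne W y' L' p' t = i := by
          apply fe_inj r hfin y'
          rw [← hfst, h, ← hi]
        obtain ⟨hc1, hc2⟩ := idxF_cell r hfin hne W hW1 hWsum y' L' p' t hp'nonneg htc.1 htc.2
        rw [hidx] at hc1 hc2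
        constructor
        · rw [hLdef]; exact hc1
        · rw [hLdef]
          nlinarith [hc2]
      · intro htmem
        obtain ⟨ht1, ht2⟩ := htmem
        have hidx : idxF r hfin hne W y' L' p' t = i := by
          apply idxF_eq r hfin hne W y' L' p' t hp'nonneg i
          · rw [hLdef] at ht1; linarith
          · rw [hLdef] at ht2; nlinarith [ht2]
        rw [hfst, hidx, hi]
    refine ⟨L, ?_, ?_⟩
    · -- set equality
      rw [hprod, ← hfwi]
      ext t
      simp only [Set.mem_setOf_eq]
      constructor
      · rintro ⟨ht01, hall⟩
        obtain ⟨hword, hlast⟩ := (hforall t).mp hall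
        have htc : t ∈ Set.Ico L' (L' + p') := by
          rw [← hset']
          exact ⟨ht01, hword⟩
        exact (hkey t htc ht01 hword).mp hlast
      · intro htmem
        have htc : t ∈ Set.Ico L' (L' + p') := hIcoSub htmem
        have ht01hword : t ∈ {s : ℝ | s ∈ Set.Ico (0 : ℝ) 1 ∧
            ∀ j : Fin n, (DD r hfin hne W x ((j : ℕ) + 1) s).1 = a' j} := by
          rw [hset']
          exact htc
        obtain ⟨ht01, hword⟩ := ht01hword
        refine ⟨ht01, (hforall t).mpr ⟨hword, ?_⟩⟩
        exact (hkey t htc ht01 hword).mpr htmem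
    · -- value of DD at level n+1
      intro t htall
      obtain ⟨ht01, hall⟩ := htall
      obtain ⟨hword, hlast⟩ := (hforall t).mp hall
      have htc : t ∈ Set.Ico L' (L' + p') := by
        rw [← hset']
        exact ⟨ht01, hword⟩
      have hDt : DD r hfin hne W x n t = (y', L', p') := hDD' t ⟨ht01, hword⟩
      have hidx : idxF r hfin hne W y' L' p' t = i := by
        apply fe_inj r hfin y'
        have hfst : (DD r hfin hne W x (n + 1) t).1 =
            fe r hfin y' (idxF r hfin hne W y' L' p' t) := by
          rw [DD_succ, hDt]
          rfl
        rw [← hfst, hlast, ← hi]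
      have : DD r hfin hne W x (n + 1) t = gstep r hfin W (y', L', p') i := by
        rw [DD_succ, hDt, nxt]
        congr 1
      rw [this, gstep]
      simp only []
      refine Prod.ext ?_ (Prod.ext ?_ ?_)
      · show fe r hfin y' i = lastPt x (n + 1) a
        rw [hi, lastPt, dif_pos (by omega)]
        rfl
      · show L' + p' * fc r hfin W y' i = L
        rw [hLdef]
      · show p' * fw r hfin W y' (i : ℕ) = ∏ j : Fin (n + 1), (W (a j)).toReal
        rw [hprod, hfwi]

lemma PP_cyl (hW1 : ∀ x, W x ≤ 1) (hWsum : ∀ x : X, ∑' y : r ⁻¹' {x}, W y.1 = 1)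
    (x : X) (n : ℕ) (a : Fin n → X) (ha : cylOK r x n a) :
    PP r hfin hne W x (cylSet r x n a) = ∏ j : Fin n, W (a j) := by
  obtain ⟨L, hset, -⟩ := cell_lemma r hfin hne W hW1 hWsum x n a ha
  rw [PP, Measure.map_apply (meas_Phi r hfin hne W x) (measurableSet_cylSet r x n a),
    Measure.restrict_apply (meas_Phi r hfin hne W x (measurableSet_cylSet r x n a))]
  have hpre : (Phi r hfin hne W x) ⁻¹' (cylSet r x n a) ∩ Set.Ico (0 : ℝ) 1 =
      {t : ℝ | t ∈ Set.Ico (0 : ℝ) 1 ∧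
        ∀ j : Fin n, (DD r hfin hne W x ((j : ℕ) + 1) t).1 = a j} := by
    ext t
    simp only [Set.mem_inter_iff, Set.mem_preimage, Set.mem_setOf_eq]
    constructor
    · rintro ⟨⟨_, h2⟩, ht01⟩
      refine ⟨ht01, fun j => ?_⟩
      have := h2 j
      rw [show ((j : ℕ) : ℤ) + 1 = (((j : ℕ) + 1 : ℕ) : ℤ) by push_cast; ring] at this
      rw [← this]
      show (DD r hfin hne W x ((j : ℕ) + 1) t).1 = pathFun r hfin hne W x t
        ((((j : ℕ) + 1 : ℕ) : ℤ))
      rw [pathFun_nat]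
    · rintro ⟨ht01, h⟩
      refine ⟨⟨Phi_zero r hfin hne W x t, fun j => ?_⟩, ht01⟩
      show pathFun r hfin hne W x t (((j : ℕ) : ℤ) + 1) = a j
      rw [show ((j : ℕ) : ℤ) + 1 = (((j : ℕ) + 1 : ℕ) : ℤ) by push_cast; ring, pathFun_nat]
      exact h j
  rw [hpre, hset, Real.volume_Ico, add_sub_cancel_left]
  have hnt : ∀ j ∈ Finset.univ, W (a j) ≠ ⊤ :=
    fun j _ => (lt_of_le_of_lt (hW1 _) ENNReal.one_lt_top).ne
  rw [← ENNReal.toReal_prod, ENNReal.ofReal_toReal (ENNReal.prod_ne_top hnt)]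

end Cell

lemma cylSet_zero (r : X → X) (x : X) (a : Fin 0 → X) :
    cylSet r x 0 a = {z : Solenoid r | z.1 0 = x} := by
  ext z
  simp [cylSet]

lemma shiftHat_coord (r : X → X) (z : Solenoid r) (k : ℤ) :
    (shiftHat r z).1 k = z.1 (k - 1) := rfl

lemma meas_shiftHat (r : X → X) : Measurable (shiftHat r) := by
  refine Measurable.subtype_mk ?_
  rw [measurable_pi_iff]
  intro n
  exact ev_measurable r (n - 1)

lemma tail_cylOK (r : X → X) {x : X} {m : ℕ} {a : Fin (m + 1) → X}
    (ha : cylOK r x (m + 1) a) : cylOK r (a 0) m (fun j => a j.succ) := by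
  constructor
  · intro h
    exact ha.2 0 (by omega)
  · intro j hj
    exact ha.2 (j + 1) (by omega)

open scoped Classical in
lemma markov_inter (r : X → X) {x y : X} (m : ℕ) (a : Fin (m + 1) → X) :
    {z : Solenoid r | z.1 0 = y} ∩ shiftHat r ⁻¹' (cylSet r x (m + 1) a) =
      if y = a 0 then cylSet r y m (fun j => a j.succ) ∩
        shiftHat r ⁻¹' {z : Solenoid r | z.1 0 = x} else ∅ := by
  classical
  have coord : ∀ (z : Solenoid r) (j : Fin (m + 1)),
      (shiftHat r z).1 ((j : ℕ) + 1) = z.1 ((j : ℕ)) := by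
    intro z j
    rw [shiftHat_coord, add_sub_cancel_right]
  by_cases hy0 : y = a 0
  · rw [if_pos hy0]
    ext z
    simp only [Set.mem_inter_iff, Set.mem_preimage, Set.mem_setOf_eq, cylSet]
    constructor
    · rintro ⟨hz0, hsx, hall⟩
      refine ⟨⟨hz0, fun j' => ?_⟩, hsx⟩
      have h := hall j'.succ
      rw [coord] at h
      rw [show (((j'.succ : ℕ)) : ℤ) = ((j' : ℕ) : ℤ) + 1 by
        rw [Fin.val_succ]; push_cast; ring] at h
      exact h
    · rintro ⟨⟨hz0, hall⟩, hsx⟩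
      refine ⟨hz0, hsx, fun j => ?_⟩
      rw [coord]
      rcases Nat.eq_zero_or_pos (j : ℕ) with h0 | h0
      · have hj0 : j = 0 := Fin.ext h0
        rw [hj0]
        show z.1 ((0 : ℕ) : ℤ) = a 0
        rw [Nat.cast_zero, hz0, hy0]
      · set j' : Fin m := ⟨(j : ℕ) - 1, by have := j.2; omega⟩ with hj'
        have hval : (j' : ℕ) = (j : ℕ) - 1 := rfl
        have hjj : j = j'.succ := by
          apply Fin.ext
          rw [Fin.val_succ]
          have := j.2
          omega
        rw [hjj]
        have h := hall j'
        rw [show (((j'.succ : ℕ)) : ℤ) = ((j' : ℕ) : ℤ) + 1 by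
          rw [Fin.val_succ]; push_cast; ring]
        exact h
  · rw [if_neg hy0]
    ext z
    simp only [Set.mem_inter_iff, Set.mem_preimage, Set.mem_setOf_eq, cylSet,
      Set.mem_empty_iff_false, iff_false, not_and]
    intro hz0 hsx
    intro hall
    apply hy0
    have h := hall 0
    rw [coord] at h
    rw [← hz0]
    rw [show (((0 : Fin (m + 1)) : ℕ) : ℤ) = 0 from rfl] at h
    exact h

lemma markov_lemma (r : X → X) (hfin : ∀ x : X, (r ⁻¹' {x}).Finite)
    (W : X → ℝ≥0∞) (hWsum : ∀ x : X, ∑' y : r ⁻¹' {x}, W y.1 = 1)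
    (P : X → Measure (Solenoid r)) (hP : IsPathMeasureFamily r W P)
    (E : Set (Solenoid r)) (hE : MeasurableSet E) (x : X) :
    ∑' y : r ⁻¹' {x},
        W y.1 * P y.1 ({ω : Solenoid r | ω.1 0 = y.1} ∩ shiftHat r ⁻¹' E)
      = P x ({ω : Solenoid r | ω.1 0 = x} ∩ E) := by
  classical
  haveI : ∀ y : X, IsProbabilityMeasure (P y) := hP.1
  set S : X → Set (Solenoid r) := fun y => {z : Solenoid r | z.1 0 = y} with hS
  have hSsub : ∀ y : X, r y = x → S y ⊆ shiftHat r ⁻¹' (S x) := by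
    intro y hy z hz
    show z.1 (0 - 1) = x
    rw [sol_pred r z 0, hz, hy]
  set ν : Measure (Solenoid r) := Measure.sum (fun y : (r ⁻¹' {x} : Set X) =>
    W y.1 • (Measure.map (shiftHat r) ((P y.1).restrict (S y.1)))) with hν
  have hν_apply : ∀ (A : Set (Solenoid r)), MeasurableSet A →
      ν A = ∑' y : (r ⁻¹' {x} : Set X), W y.1 * P y.1 (S y.1 ∩ shiftHat r ⁻¹' A) := by
    intro A hA
    rw [hν, Measure.sum_apply _ hA]
    refine tsum_congr fun y => ?_
    rw [Measure.smul_apply, Measure.map_apply (meas_shiftHat r) hA,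
      Measure.restrict_apply ((meas_shiftHat r) hA), Set.inter_comm, smul_eq_mul]
  have hν_univ : ν Set.univ = 1 := by
    rw [hν_apply Set.univ MeasurableSet.univ]
    have h : ∀ y : (r ⁻¹' {x} : Set X),
        W y.1 * P y.1 (S y.1 ∩ shiftHat r ⁻¹' Set.univ) = W y.1 := by
      intro y
      rw [Set.preimage_univ, Set.inter_univ, hP.2.1 y.1, mul_one]
    rw [tsum_congr h, hWsum x]
  haveI hνP : IsProbabilityMeasure ν := ⟨hν_univ⟩
  have hν_Sx : ν (S x) = 1 := by
    rw [hν_apply _ (measurableSet_start r x)]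
    have h : ∀ y : (r ⁻¹' {x} : Set X),
        W y.1 * P y.1 (S y.1 ∩ shiftHat r ⁻¹' (S x)) = W y.1 := by
      intro y
      rw [Set.inter_eq_self_of_subset_left (hSsub y.1 y.2), hP.2.1 y.1, mul_one]
    rw [tsum_congr h, hWsum x]
  set μ' : Measure (Solenoid r) := (P x).restrict (S x) with hμ'
  haveI hμ'P : IsProbabilityMeasure μ' := by
    constructor
    rw [hμ', Measure.restrict_apply_univ, hP.2.1 x]
  have hμ'_Sx : μ' (S x) = 1 := by
    rw [hμ', Measure.restrict_apply (measurableSet_start r x), Set.inter_self, hP.2.1 x]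
  have hcylsub : ∀ (n : ℕ) (a : Fin n → X), cylSet r x n a ⊆ S x := fun n a z hz => hz.1
  have hμ'_cyl : ∀ (n : ℕ) (a : Fin n → X), μ' (cylSet r x n a) = P x (cylSet r x n a) := by
    intro n a
    rw [hμ', Measure.restrict_apply (measurableSet_cylSet r x n a),
      Set.inter_eq_self_of_subset_left (hcylsub n a)]
  have hagree : ∀ (n : ℕ) (a : Fin n → X), ν (cylSet r x n a) = μ' (cylSet r x n a) := by
    intro n a
    by_cases ha : cylOK r x n a
    · rcases n with _ | m
      · rw [cylSet_zero, hν_Sx, hμ'_Sx]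
      · -- positive length
        rw [hν_apply _ (measurableSet_cylSet r x (m + 1) a), hμ'_cyl,
          hP.2.2 x (m + 1) a ha]
        have hinter : ∀ y : (r ⁻¹' {x} : Set X),
            W y.1 * P y.1 (S y.1 ∩ shiftHat r ⁻¹' (cylSet r x (m + 1) a)) =
            if y.1 = a 0 then W y.1 * P y.1 (cylSet r y.1 m (fun j => a j.succ)) else 0 := by
          intro y
          rw [markov_inter r m a]
          by_cases hy0 : y.1 = a 0
          · rw [if_pos hy0, if_pos hy0,
              Set.inter_eq_self_of_subset_left ?hsub]
            case hsub =>
              refine subset_trans (fun z hz => hz.1) (hSsub y.1 y.2)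
          · rw [if_neg hy0, if_neg hy0, measure_empty, mul_zero]
        rw [tsum_congr hinter]
        have ha0 : r (a 0) = x := ha.1 (by omega)
        set y0 : (r ⁻¹' {x} : Set X) := ⟨a 0, ha0⟩ with hy0def
        rw [tsum_eq_single y0 ?hsingle]
        case hsingle =>
          intro y hy
          rw [if_neg]
          intro hc
          exact hy (Subtype.ext hc)
        rw [if_pos rfl]
        have htail := tail_cylOK r ha
        rw [hP.2.2 (a 0) m (fun j => a j.succ) htail]
        rw [Fin.prod_univ_succ]
    · rw [cylSet_eq_empty r ha]
      simp
  have hfinal : ν = μ' := by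
    refine measure_eq_of_cyl r hfin x ν μ' hν_Sx hμ'_Sx hagree
  calc ∑' y : (r ⁻¹' {x} : Set X), W y.1 * P y.1 (S y.1 ∩ shiftHat r ⁻¹' E)
      = ν E := (hν_apply E hE).symm
    _ = μ' E := by rw [hfinal]
    _ = P x (S x ∩ E) := by rw [hμ', Measure.restrict_apply hE, Set.inter_comm]

end St7


theorem statement7
    {X : Type*} [MetricSpace X] [CompactSpace X] [MeasurableSpace X] [BorelSpace X]
    (r : X → X) (hr : Measurable r)
    (hfin : ∀ x : X, (r ⁻¹' {x}).Finite) (hne : ∀ x : X, (r ⁻¹' {x}).Nonempty)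
    (W : X → ℝ≥0∞) (hWm : Measurable W) (hW1 : ∀ x, W x ≤ 1)
    (hWsum : ∀ x : X, ∑' y : r ⁻¹' {x}, W y.1 = 1) :
    (∃! P : X → Measure (Solenoid r), IsPathMeasureFamily r W P) ∧
    (∀ P : X → Measure (Solenoid r), IsPathMeasureFamily r W P →
      ∀ E : Set (Solenoid r), MeasurableSet E → ∀ x : X,
        ∑' y : r ⁻¹' {x},
            W y.1 * P y.1 ({ω : Solenoid r | ω.1 0 = y.1} ∩ shiftHat r ⁻¹' E)
          = P x ({ω : Solenoid r | ω.1 0 = x} ∩ E)) := by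
  
  classical
  have hfam : IsPathMeasureFamily r W (fun x => St7.PP r hfin hne W x) :=
    ⟨fun x => St7.PP_prob r hfin hne W x, fun x => St7.PP_start r hfin hne W x,
      fun x n a ha => St7.PP_cyl r hfin hne W hW1 hWsum x n a ha⟩
  constructor
  · refine ⟨fun x => St7.PP r hfin hne W x, hfam, ?_⟩
    intro Q hQ
    funext x
    haveI := hQ.1 x
    haveI := hfam.1 x
    refine St7.measure_eq_of_cyl r hfin x (Q x) (St7.PP r hfin hne W x) (hQ.2.1 x)
      (hfam.2.1 x) ?_
    intro n a
    by_cases ha : cylOK r x n a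
    · rw [hQ.2.2 x n a ha, hfam.2.2 x n a ha]
    · rw [St7.cylSet_eq_empty r ha]
      simp
  · intro P hP E hE x
    exact St7.markov_lemma r hfin W hWsum P hP E hE x
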